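/- Let f₁,…,f_N be nonzero reals, and b₁,…,b_N, c₁,…,c_N reals with bᵢ ≠ cⱼ for all i,j. Then det(δ_{i,j} + fᵢ(bⱼ−cⱼ)/(bᵢ−cⱼ))_{i,j=1}^N = Σ_{T ⊆ [N]} (∏_{i<j, i,j∈T} Z_{i,j}) · ∏_{i∈T} fᵢ, where Z_{i,j} = (bᵢ−bⱼ)(cᵢ−cⱼ)/((bᵢ−cⱼ)(cᵢ−bⱼ)). -/

import Mathlib

open Finset Matrix


lemma prod_filter_succ_lt {n : ℕ} (i : Fin n) (g : Fin (n + 1) → ℝ) :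
    ∏ j ∈ univ.filter (fun j => i.succ < j), g j
      = ∏ j ∈ univ.filter (fun j => i < j), g j.succ := by
  rw [Finset.prod_filter, Finset.prod_filter, Fin.prod_univ_succ]
  simp [Fin.succ_lt_succ_iff, (Fin.succ_pos i).not_gt]

lemma prod_filter_zero_lt {n : ℕ} (g : Fin (n + 1) → ℝ) :
    ∏ j ∈ univ.filter (fun j => (0 : Fin (n+1)) < j), g j = ∏ j : Fin n, g j.succ := by
  rw [Finset.prod_filter, Fin.prod_univ_succ]
  simp [Fin.succ_pos]

lemma det_eq_of_forall_col_eq_smul_add_const' {n : Type*} [DecidableEq n] [Fintype n]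
    {A B : Matrix n n ℝ} (c : n → ℝ) (k : n) (hk : c k = 0)
    (h : ∀ i j, A i j = B i j + c j * B i k) : A.det = B.det := by
  rw [← Matrix.det_transpose A, ← Matrix.det_transpose B]
  exact Matrix.det_eq_of_forall_row_eq_smul_add_const c k hk fun i j => h j i

lemma cauchy_det : ∀ (n : ℕ) (b c : Fin n → ℝ), (∀ i j, b i ≠ c j) →
    Matrix.det (Matrix.of fun i j => (b i - c j)⁻¹)
      = (∏ i, ∏ j ∈ univ.filter (fun j => i < j), ((b j - b i) * (c i - c j)))
        / ∏ i, ∏ j, (b i - c j) := by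
  intro n
  induction n with
  | zero => intro b c _; simp [Matrix.det_fin_zero]
  | succ n ih =>
    intro b c hbc
    have hbc' : ∀ i j, b i - c j ≠ 0 := fun i j => sub_ne_zero_of_ne (hbc i j)
    set C₁ : Matrix (Fin (n+1)) (Fin (n+1)) ℝ := Matrix.of fun i j =>
      if j = 0 then (b i - c 0)⁻¹ else (c j - c 0) * ((b i - c j)⁻¹ * (b i - c 0)⁻¹) with hC1
    have step1 : Matrix.det (Matrix.of fun i j : Fin (n+1) => (b i - c j)⁻¹) = C₁.det := by
      apply det_eq_of_forall_col_eq_smul_add_const'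
        (fun j => if j = 0 then 0 else 1) 0 (by simp)
      intro i j
      by_cases hj : j = 0
      · simp [hC1, hj]
      · simp only [hC1, Matrix.of_apply, if_neg hj, if_pos rfl, ↓reduceIte]
        have h1 := hbc' i j
        have h2 := hbc' i 0
        field_simp
        ring
    set C₂ : Matrix (Fin (n+1)) (Fin (n+1)) ℝ := Matrix.of fun i j =>
      if j = 0 then 1 else (c j - c 0) * (b i - c j)⁻¹ with hC2
    have step2 : C₁.det = (∏ i, (b i - c 0)⁻¹) * C₂.det := by
      have : C₁ = Matrix.of fun i j => (b i - c 0)⁻¹ * C₂ i j := by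
        ext i j
        by_cases hj : j = 0 <;> simp [hC1, hC2, hj] <;> ring
      rw [this, Matrix.det_mul_column]
    set C₃ : Matrix (Fin (n+1)) (Fin (n+1)) ℝ := Matrix.of fun i j =>
      if j = 0 then 1 else (b i - c j)⁻¹ with hC3
    have step3 : C₂.det = (∏ j, if j = 0 then 1 else c j - c 0) * C₃.det := by
      have : C₂ = Matrix.of fun i j => (if j = 0 then 1 else c j - c 0) * C₃ i j := by
        ext i j
        by_cases hj : j = 0 <;> simp [hC2, hC3, hj]
      rw [this, Matrix.det_mul_row]
    set C₄ : Matrix (Fin (n+1)) (Fin (n+1)) ℝ := Matrix.of fun i j =>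
      if i = 0 then (if j = 0 then 1 else (b 0 - c j)⁻¹)
      else (if j = 0 then 0 else (b 0 - b i) * ((b i - c j)⁻¹ * (b 0 - c j)⁻¹)) with hC4
    have step4 : C₃.det = C₄.det := by
      apply Matrix.det_eq_of_forall_row_eq_smul_add_const
        (fun i => if i = 0 then 0 else 1) 0 (by simp)
      intro i j
      by_cases hi : i = 0
      · by_cases hj : j = 0 <;> simp [hC3, hC4, hi, hj]
      · by_cases hj : j = 0
        · simp [hC3, hC4, hi, hj]
        · simp only [hC3, hC4, Matrix.of_apply, if_neg hi, if_neg hj, if_pos rfl, ↓reduceIte]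
          have h1 := hbc' i j
          have h2 := hbc' 0 j
          field_simp
          ring
    set C₅ : Matrix (Fin (n+1)) (Fin (n+1)) ℝ := Matrix.of fun i j =>
      if i = 0 then 1 else (if j = 0 then 0 else (b 0 - b i) * (b i - c j)⁻¹) with hC5
    have step5 : C₄.det = (∏ j, if j = 0 then 1 else (b 0 - c j)⁻¹) * C₅.det := by
      have : C₄ = Matrix.of fun i j => (if j = 0 then 1 else (b 0 - c j)⁻¹) * C₅ i j := by
        ext i j
        by_cases hi : i = 0 <;> by_cases hj : j = 0 <;> simp [hC4, hC5, hi, hj] <;> ring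
      rw [this, Matrix.det_mul_row]
    have step6 : C₅.det =
        Matrix.det (Matrix.of fun i j : Fin n =>
          (b 0 - b i.succ) * (b i.succ - c j.succ)⁻¹) := by
      have hsub : C₅.submatrix Fin.succ Fin.succ
          = Matrix.of fun i j : Fin n => (b 0 - b i.succ) * (b i.succ - c j.succ)⁻¹ := by
        ext i j
        simp [hC5, Fin.succ_ne_zero]
      rw [Matrix.det_succ_column_zero]
      rw [Finset.sum_eq_single 0]
      · simp only [hC5, Fin.val_zero, pow_zero, one_mul, Matrix.of_apply, if_pos rfl]
        rw [Fin.succAbove_zero, hsub]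
        simp
      · intro i _ hi
        simp [hC5, if_neg hi, hi]
      · intro h; exact absurd (Finset.mem_univ 0) h
    have step7 : Matrix.det (Matrix.of fun i j : Fin n =>
          (b 0 - b i.succ) * (b i.succ - c j.succ)⁻¹)
        = (∏ i : Fin n, (b 0 - b i.succ)) *
          Matrix.det (Matrix.of fun i j : Fin n => (b i.succ - c j.succ)⁻¹) := by
      exact Matrix.det_mul_column _ _
    have hrec := ih (fun i => b i.succ) (fun j => c j.succ) (fun i j => hbc _ _)
    rw [step1, step2, step3, step4, step5, step6, step7, hrec]
    -- rewrite the if-products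
    have hw1 : (∏ j : Fin (n+1), if j = 0 then (1:ℝ) else c j - c 0)
        = ∏ j : Fin n, (c j.succ - c 0) := by
      rw [Fin.prod_univ_succ]; simp [Fin.succ_ne_zero]
    have hw2 : (∏ j : Fin (n+1), if j = 0 then (1:ℝ) else (b 0 - c j)⁻¹)
        = ∏ j : Fin n, (b 0 - c j.succ)⁻¹ := by
      rw [Fin.prod_univ_succ]; simp [Fin.succ_ne_zero]
    have hx : (∏ i : Fin (n+1), (b i - c 0)⁻¹)
        = ((b 0 - c 0) * ∏ i : Fin n, (b i.succ - c 0))⁻¹ := by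
      rw [Fin.prod_univ_succ, mul_inv, Finset.prod_inv_distrib]
    -- split target numerator and denominator
    have hN : (∏ i : Fin (n+1), ∏ j ∈ univ.filter (fun j => i < j), ((b j - b i) * (c i - c j)))
        = (∏ j : Fin n, ((b j.succ - b 0) * (c 0 - c j.succ))) *
          ∏ i : Fin n, ∏ j ∈ univ.filter (fun j => i < j),
            ((b j.succ - b i.succ) * (c i.succ - c j.succ)) := by
      rw [Fin.prod_univ_succ, prod_filter_zero_lt]
      congr 1
      exact Finset.prod_congr rfl fun i _ => prod_filter_succ_lt i _
    have hD : (∏ i : Fin (n+1), ∏ j : Fin (n+1), (b i - c j))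
        = ((b 0 - c 0) * ∏ j : Fin n, (b 0 - c j.succ)) *
          ((∏ i : Fin n, (b i.succ - c 0)) *
            ∏ i : Fin n, ∏ j : Fin n, (b i.succ - c j.succ)) := by
      rw [Fin.prod_univ_succ, Fin.prod_univ_succ]
      rw [show (∏ i : Fin n, ∏ j : Fin (n+1), (b i.succ - c j))
          = ∏ i : Fin n, ((b i.succ - c 0) * ∏ j : Fin n, (b i.succ - c j.succ))
          from Finset.prod_congr rfl fun i _ => Fin.prod_univ_succ _]
      rw [Finset.prod_mul_distrib]
    rw [hw1, hw2, hx, hN, hD]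
    have e1 : (b 0 - c 0) ≠ 0 := hbc' 0 0
    have e2 : (∏ i : Fin n, (b i.succ - c 0)) ≠ 0 :=
      Finset.prod_ne_zero_iff.2 fun i _ => hbc' i.succ 0
    have e3 : (∏ j : Fin n, (b 0 - c j.succ)) ≠ 0 :=
      Finset.prod_ne_zero_iff.2 fun j _ => hbc' 0 j.succ
    have e4 : (∏ i : Fin n, ∏ j : Fin n, (b i.succ - c j.succ)) ≠ 0 :=
      Finset.prod_ne_zero_iff.2 fun i _ => Finset.prod_ne_zero_iff.2 fun j _ => hbc' i.succ j.succ
    have hsign : (∏ j : Fin n, ((b j.succ - b 0) * (c 0 - c j.succ)))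
        = (∏ j : Fin n, (c j.succ - c 0)) * ∏ i : Fin n, (b 0 - b i.succ) := by
      rw [← Finset.prod_mul_distrib]
      exact Finset.prod_congr rfl fun j _ => by ring
    rw [hsign]
    rw [Finset.prod_inv_distrib]
    field_simp

lemma prod_prod_split {n : ℕ} (g : Fin n → Fin n → ℝ) :
    ∏ i, ∏ j, g i j = (∏ i, g i i) * (∏ i, ∏ j ∈ univ.filter (fun j => i < j), g i j)
      * (∏ i, ∏ j ∈ univ.filter (fun j => i < j), g j i) := by
  have hswap : (∏ i, ∏ j ∈ univ.filter (fun j => j < i), g i j)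
      = ∏ i, ∏ j ∈ univ.filter (fun j => i < j), g j i := by
    rw [Finset.prod_comm' (t' := univ) (s' := fun j => univ.filter (fun i => j < i))]
    intro i j
    simp
  have hsplit : ∀ i : Fin n, ∏ j, g i j
      = g i i * (∏ j ∈ univ.filter (fun j => i < j), g i j)
        * ∏ j ∈ univ.filter (fun j => j < i), g i j := by
    intro i
    rw [← Finset.prod_filter_mul_prod_filter_not univ (fun j => i < j) (g i)]
    rw [← Finset.prod_filter_mul_prod_filter_not (univ.filter (fun j => ¬ i < j))
      (fun j => j < i) (g i), Finset.filter_filter, Finset.filter_filter]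
    have ha : univ.filter (fun j => ¬ i < j ∧ j < i) = univ.filter (fun j => j < i) := by
      ext x; simp only [Finset.mem_filter, Finset.mem_univ, true_and, Fin.lt_def]; omega
    have hb : univ.filter (fun j : Fin n => ¬ i < j ∧ ¬ j < i) = {i} := by
      ext x; simp only [Finset.mem_filter, Finset.mem_univ, true_and, Finset.mem_singleton, Fin.lt_def, Fin.ext_iff]; omega
    rw [ha, hb, Finset.prod_singleton]
    ring
  calc ∏ i, ∏ j, g i j
      = ∏ i, (g i i * (∏ j ∈ univ.filter (fun j => i < j), g i j)
          * ∏ j ∈ univ.filter (fun j => j < i), g i j) :=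
        Finset.prod_congr rfl fun i _ => hsplit i
    _ = _ := by rw [Finset.prod_mul_distrib, Finset.prod_mul_distrib, hswap]

lemma soliton_minor (n : ℕ) (f b c : Fin n → ℝ) (hbc : ∀ i j, b i ≠ c j) :
    Matrix.det (Matrix.of fun i j => f i * (b j - c j) / (b i - c j))
      = (∏ i, ∏ j ∈ univ.filter (fun j => i < j),
          ((b i - b j) * (c i - c j) / ((b i - c j) * (c i - b j)))) * ∏ i, f i := by
  have hbc' : ∀ i j, b i - c j ≠ 0 := fun i j => sub_ne_zero_of_ne (hbc i j)
  have h1 : (Matrix.of fun i j => f i * (b j - c j) / (b i - c j))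
      = Matrix.of fun i j =>
        f i * (Matrix.of fun i' j' : Fin n => (b j' - c j') * (b i' - c j')⁻¹) i j := by
    ext i j; simp [div_eq_mul_inv, mul_assoc]
  rw [h1, Matrix.det_mul_column]
  have h2 : (Matrix.of fun i' j' : Fin n => (b j' - c j') * (b i' - c j')⁻¹)
      = Matrix.of fun i j =>
        (fun k => b k - c k) j * (Matrix.of fun i' j' : Fin n => (b i' - c j')⁻¹) i j := rfl
  rw [h2, Matrix.det_mul_row, cauchy_det n b c hbc]
  rw [prod_prod_split (fun i j => b i - c j)]
  have key : ∀ i : Fin n, ∀ j ∈ univ.filter (fun j => i < j),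
      (b j - b i) * (c i - c j)
        = ((b i - b j) * (c i - c j) / ((b i - c j) * (c i - b j)))
          * ((b i - c j) * (b j - c i)) := by
    intro i j _
    have h1 := hbc' i j
    have h2 := hbc' j i
    have h3 : c i - b j ≠ 0 := fun h => h2 (by linarith [sub_eq_zero.1 h])
    field_simp
    ring
  have hnum : (∏ i, ∏ j ∈ univ.filter (fun j => i < j), ((b j - b i) * (c i - c j)))
      = (∏ i, ∏ j ∈ univ.filter (fun j => i < j),
          ((b i - b j) * (c i - c j) / ((b i - c j) * (c i - b j))))
        * ((∏ i, ∏ j ∈ univ.filter (fun j => i < j), (b i - c j))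
          * (∏ i, ∏ j ∈ univ.filter (fun j => i < j), (b j - c i))) := by
    rw [← Finset.prod_mul_distrib, ← Finset.prod_mul_distrib]
    refine Finset.prod_congr rfl fun i _ => ?_
    rw [← Finset.prod_mul_distrib, ← Finset.prod_mul_distrib]
    exact Finset.prod_congr rfl (key i)
  rw [hnum]
  have e1 : (∏ i, (b i - c i)) ≠ 0 := Finset.prod_ne_zero_iff.2 fun i _ => hbc' i i
  have e2 : (∏ i, ∏ j ∈ univ.filter (fun j => i < j), (b i - c j)) ≠ 0 :=
    Finset.prod_ne_zero_iff.2 fun i _ => Finset.prod_ne_zero_iff.2 fun j _ => hbc' i j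
  have e3 : (∏ i, ∏ j ∈ univ.filter (fun j => i < j), (b j - c i)) ≠ 0 :=
    Finset.prod_ne_zero_iff.2 fun i _ => Finset.prod_ne_zero_iff.2 fun j _ => hbc' j i
  generalize (∏ i, ∏ j ∈ univ.filter (fun j => i < j),
      ((b i - b j) * (c i - c j) / ((b i - c j) * (c i - b j)))) = Z
  field_simp

lemma det_piecewise (N : ℕ) (M : Matrix (Fin N) (Fin N) ℝ) (s : Finset (Fin N)) :
    Matrix.det (Matrix.of fun i j => if i ∈ s then M i j else (1 : Matrix (Fin N) (Fin N) ℝ) i j)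
      = Matrix.det (Matrix.of fun i j : {x // x ∈ s} => M i j) := by
  classical
  set A : Matrix (Fin N) (Fin N) ℝ :=
    Matrix.of fun i j => if i ∈ s then M i j else (1 : Matrix (Fin N) (Fin N) ℝ) i j with hA
  rw [← Matrix.det_submatrix_equiv_self (Equiv.sumCompl (· ∈ s)) A]
  have : A.submatrix (Equiv.sumCompl (· ∈ s)) (Equiv.sumCompl (· ∈ s))
      = Matrix.fromBlocks (Matrix.of fun i j : {x // x ∈ s} => M i j)
        (Matrix.of fun (i : {x // x ∈ s}) (j : {x // ¬ x ∈ s}) => M i j) 0 1 := by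
    ext i j
    rcases i with i | i <;> rcases j with j | j <;>
      simp only [Matrix.submatrix_apply, Equiv.sumCompl_apply_inl, Equiv.sumCompl_apply_inr,
        Matrix.fromBlocks_apply₁₁, Matrix.fromBlocks_apply₁₂, Matrix.fromBlocks_apply₂₁,
        Matrix.fromBlocks_apply₂₂, hA, Matrix.of_apply]
    · rw [if_pos i.2]
    · rw [if_pos i.2]
    · rw [if_neg i.2, Matrix.one_apply_ne, Matrix.zero_apply]
      exact fun h => i.2 (h ▸ j.2)
    · rw [if_neg i.2, Matrix.one_apply, Matrix.one_apply]
      simp [Subtype.ext_iff]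
  rw [this, Matrix.det_fromBlocks_zero₂₁, Matrix.det_one, mul_one]

theorem soliton_det_expansion (N : ℕ) (f b c : Fin N → ℝ)
    (hf : ∀ i, f i ≠ 0) (hbc : ∀ i j, b i ≠ c j) :
    Matrix.det (Matrix.of fun i j : Fin N =>
        (if i = j then (1 : ℝ) else 0) + f i * (b j - c j) / (b i - c j)) =
      ∑ T : Finset (Fin N),
        (∏ i ∈ T, ∏ j ∈ T.filter fun j => i < j,
          ((b i - b j) * (c i - c j) / ((b i - c j) * (c i - b j)))) *
        ∏ i ∈ T, f i := by
  classical
  set M : Matrix (Fin N) (Fin N) ℝ :=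
    Matrix.of fun i j => f i * (b j - c j) / (b i - c j) with hM
  have hL : (Matrix.of fun i j : Fin N =>
      (if i = j then (1 : ℝ) else 0) + f i * (b j - c j) / (b i - c j)) = M + 1 := by
    ext i j
    simp [hM, Matrix.one_apply, add_comm]
  rw [hL]
  have expand : (M + 1).det = ∑ s : Finset (Fin N),
      Matrix.det (Matrix.of fun i j =>
        if i ∈ s then M i j else (1 : Matrix (Fin N) (Fin N) ℝ) i j) := by
    have h := (Matrix.detRowAlternating (R := ℝ) (n := Fin N)).toMultilinearMap.map_add_univ
      (fun i => M i) (fun i => (1 : Matrix (Fin N) (Fin N) ℝ) i)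
    have hpiece : ∀ s : Finset (Fin N),
        (Matrix.of fun i j => if i ∈ s then M i j else (1 : Matrix (Fin N) (Fin N) ℝ) i j)
          = s.piecewise (fun i => M i) (fun i => (1 : Matrix (Fin N) (Fin N) ℝ) i) := by
      intro s
      funext i j
      by_cases hi : i ∈ s <;> simp [Finset.piecewise, hi]
    have hL2 : Matrix.det (M + 1)
        = Matrix.detRowAlternating (R := ℝ) (n := Fin N)
            ((fun i => M i) + fun i => (1 : Matrix (Fin N) (Fin N) ℝ) i) := rfl
    exact hL2.trans (h.trans
      (Finset.sum_congr rfl fun s _ => (congr_arg Matrix.det (hpiece s)).symm))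
  rw [expand]
  refine Finset.sum_congr rfl fun s _ => ?_
  rw [det_piecewise N M s]
  -- reindex by the order isomorphism
  set σ := s.orderIsoOfFin rfl with hσ
  rw [← Matrix.det_submatrix_equiv_self σ.toEquiv (Matrix.of fun i j : {x // x ∈ s} => M i j)]
  have hsub : (Matrix.of fun i j : {x // x ∈ s} => M i j).submatrix σ.toEquiv σ.toEquiv
      = Matrix.of fun i j : Fin s.card =>
        (fun t => f ((σ t : Fin N))) i *
          ((fun t => b ((σ t : Fin N))) j - (fun t => c ((σ t : Fin N))) j) /
          ((fun t => b ((σ t : Fin N))) i - (fun t => c ((σ t : Fin N))) j) := by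
    ext i j
    simp [hM]
  rw [hsub, soliton_minor s.card _ _ _ (fun i j => hbc _ _)]
  congr 1
  · -- double product
    have inner : ∀ i : Fin s.card,
        (∏ j ∈ univ.filter (fun j => i < j),
          ((b (σ i : Fin N) - b (σ j : Fin N)) * (c (σ i : Fin N) - c (σ j : Fin N)) /
            ((b (σ i : Fin N) - c (σ j : Fin N)) * (c (σ i : Fin N) - b (σ j : Fin N)))))
        = ∏ j ∈ s.filter (fun j => (σ i : Fin N) < j),
          ((b (σ i : Fin N) - b j) * (c (σ i : Fin N) - c j) /
            ((b (σ i : Fin N) - c j) * (c (σ i : Fin N) - b j))) := by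
      intro i
      refine Finset.prod_bij (fun j _ => (σ j : Fin N)) ?_ ?_ ?_ ?_
      · intro a ha
        simp only [Finset.mem_filter, Finset.mem_univ, true_and] at ha ⊢
        exact ⟨(σ a).2, by exact_mod_cast (σ.lt_iff_lt.2 ha : σ i < σ a)⟩
      · intro a₁ _ a₂ _ h
        exact σ.injective (Subtype.ext h)
      · intro y hy
        simp only [Finset.mem_filter, Finset.mem_univ, true_and] at hy
        refine ⟨σ.symm ⟨y, hy.1⟩, ?_, by simp⟩
        simp only [Finset.mem_filter, Finset.mem_univ, true_and]
        have : σ i < ⟨y, hy.1⟩ := Subtype.coe_lt_coe.1 hy.2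
        have h2 : σ (σ.symm ⟨y, hy.1⟩) = ⟨y, hy.1⟩ := σ.apply_symm_apply _
        rw [← σ.lt_iff_lt]
        rw [h2]
        exact this
      · intro a _; rfl
    calc ∏ i : Fin s.card, _ = ∏ i : Fin s.card,
        (fun a : Fin N => ∏ j ∈ s.filter (fun j => a < j),
          ((b a - b j) * (c a - c j) / ((b a - c j) * (c a - b j)))) ((σ i : Fin N)) :=
          Finset.prod_congr rfl fun i _ => inner i
      _ = ∏ x : {x // x ∈ s},
          (fun a : Fin N => ∏ j ∈ s.filter (fun j => a < j),
            ((b a - b j) * (c a - c j) / ((b a - c j) * (c a - b j)))) (x : Fin N) :=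
          Fintype.prod_equiv σ.toEquiv _ _ (fun i => rfl)
      _ = _ := Finset.prod_coe_sort s (fun a : Fin N => ∏ j ∈ s.filter (fun j => a < j),
            ((b a - b j) * (c a - c j) / ((b a - c j) * (c a - b j))))
  · calc ∏ i : Fin s.card, f ((σ i : Fin N))
        = ∏ x : {x // x ∈ s}, f (x : Fin N) := Fintype.prod_equiv σ.toEquiv _ _ (fun i => rfl)
      _ = ∏ i ∈ s, f i := Finset.prod_coe_sort s f
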